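/- Fix real constants λ₀ > 0, a > -1 and set ξ(x) = λ₀^{a+1}·(a+1)^{-1/2}·|x|^a·x. Then for all nonnegative integers m, n: ∫_{-∞}^{+∞} (λ₀²x²)^{a/2}·exp( -(λ₀²x²)^{a+1}/(a+1) )·He_m(√2·ξ(x))·He_n(√2·ξ(x)) dx = δ_{mn}·√π·n! / (λ₀·√(a+1)), where Heₙ is the probabilist's Hermite polynomial and δ_{mn} is the Kronecker delta. -/

import Mathlib

open MeasureTheory Polynomial Real Filter Set

/-- The point canonical transformation `ξ(x) = λ₀^(a+1)·(a+1)^(-1/2)·|x|^a·x`. -/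
noncomputable def xiPCT (lam a : ℝ) (x : ℝ) : ℝ :=
  lam ^ (a + 1) * (a + 1) ^ (-(1 : ℝ) / 2) * (|x| ^ a * x)

noncomputable def gauss1 : ℝ → ℝ := fun x => Real.exp (-(x ^ 2 / 2))

noncomputable def Hpoly (n : ℕ) : ℝ[X] := (hermite n).map (algebraMap ℤ ℝ)

lemma aeval_hermite_eq (n : ℕ) (x : ℝ) : aeval x (hermite n) = (Hpoly n).eval x := by
  rw [Hpoly, aeval_def, eval₂_eq_eval_map]

lemma Hpoly_monic (n : ℕ) : (Hpoly n).Monic :=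
  (hermite_monic n).map _

lemma Hpoly_natDegree (n : ℕ) : (Hpoly n).natDegree = n := by
  rw [Hpoly, (hermite_monic n).natDegree_map, natDegree_hermite]

lemma gauss1_differentiable : Differentiable ℝ gauss1 :=
  (((differentiable_pow 2).div_const 2).neg).exp

lemma deriv_iter_gauss1 (k : ℕ) :
    deriv^[k] gauss1 = fun x => (-1 : ℝ) ^ k * (Hpoly k).eval x * gauss1 x := by
  funext x
  have := Polynomial.deriv_gaussian_eq_hermite_mul_gaussian k x
  unfold gauss1
  simpa [aeval_hermite_eq] using this

lemma integrable_abs_rpow_mul_gauss {b : ℝ} (hb : 0 < b) {s : ℝ} (hs : -1 < s) :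
    Integrable fun x : ℝ => |x| ^ s * Real.exp (-b * x ^ 2) := by
  have key : IntegrableOn (fun x : ℝ => |x| ^ s * Real.exp (-b * x ^ 2)) (Set.Ioi 0) :=
    (integrableOn_rpow_mul_exp_neg_mul_sq hb hs).congr_fun
      (fun x hx => by rw [abs_of_pos hx]) measurableSet_Ioi
  rw [← integrableOn_univ, ← Set.Iio_union_Ici (a := (0:ℝ)), integrableOn_union,
    integrableOn_Ici_iff_integrableOn_Ioi]
  refine ⟨?_, key⟩
  rw [← (Measure.measurePreserving_neg (volume : Measure ℝ)).integrableOn_comp_preimage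
      (Homeomorph.neg ℝ).measurableEmbedding]
  simpa only [Function.comp_def, neg_sq, abs_neg, Set.neg_preimage, Set.neg_Iio, neg_neg,
    neg_zero] using key

lemma integrable_poly_gauss (P : ℝ[X]) :
    Integrable fun x : ℝ => P.eval x * gauss1 x := by
  have base : ∀ k : ℕ, Integrable fun x : ℝ => x ^ k * gauss1 x := by
    intro k
    have h := integrable_abs_rpow_mul_gauss (b := (1/2 : ℝ)) (by norm_num)
      (s := (k : ℝ)) (by exact_mod_cast neg_one_lt_zero.trans_le (Nat.cast_nonneg k))
    apply h.mono'
    · exact ((continuous_pow k).mul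
        (by unfold gauss1; fun_prop)).aestronglyMeasurable
    · filter_upwards with x
      have h1 : gauss1 x = Real.exp (-(1/2 : ℝ) * x ^ 2) := by
        unfold gauss1; ring_nf
      rw [h1, Real.norm_eq_abs, abs_mul, abs_pow, Real.abs_exp,
        ← Real.rpow_natCast |x| k]
  have hrepr : (fun x : ℝ => P.eval x * gauss1 x)
      = fun x => ∑ i ∈ Finset.range (P.natDegree + 1),
          P.coeff i * (x ^ i * gauss1 x) := by
    funext x
    rw [eval_eq_sum_range, Finset.sum_mul]
    simp [mul_assoc]
  rw [hrepr]
  exact integrable_finset_sum _ fun i _ => (base i).const_mul _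

lemma integrable_poly_derivGauss (P : ℝ[X]) (k : ℕ) :
    Integrable fun x : ℝ => P.eval x * deriv^[k] gauss1 x := by
  have : (fun x : ℝ => P.eval x * deriv^[k] gauss1 x)
      = fun x => (-1 : ℝ) ^ k * ((P * Hpoly k).eval x * gauss1 x) := by
    funext x
    rw [deriv_iter_gauss1 k]
    simp [eval_mul]; ring
  rw [this]
  exact (integrable_poly_gauss _).const_mul _

lemma ibp_iter (n : ℕ) (P : ℝ[X]) :
    ∫ x : ℝ, P.eval x * deriv^[n] gauss1 x
      = (-1 : ℝ) ^ n * ∫ x : ℝ, (derivative^[n] P).eval x * gauss1 x := by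
  induction n generalizing P with
  | zero => simp
  | succ n ih =>
    have hu : ∀ x : ℝ, HasDerivAt (fun y : ℝ => P.eval y) (P.derivative.eval x) x :=
      fun x => P.hasDerivAt x
    have hvdiff : Differentiable ℝ (deriv^[n] gauss1) := by
      rw [deriv_iter_gauss1 n]
      exact ((differentiable_const _).mul (Polynomial.differentiable _)).mul
        gauss1_differentiable
    have hv : ∀ x : ℝ, HasDerivAt (deriv^[n] gauss1) (deriv^[n+1] gauss1 x) x := by
      intro x
      rw [Function.iterate_succ_apply']
      exact (hvdiff x).hasDerivAt
    have h := integral_mul_deriv_eq_deriv_mul_of_integrable (fun x _ => hu x) (fun x _ => hv x)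
      (by simpa [Pi.mul_def] using integrable_poly_derivGauss P (n+1))
      (by simpa [Pi.mul_def] using integrable_poly_derivGauss (derivative P) n)
      (by simpa [Pi.mul_def] using integrable_poly_derivGauss P n)
    rw [h, ih (derivative P), ← Function.iterate_succ_apply]
    ring

lemma gauss1_integral : ∫ x : ℝ, gauss1 x = Real.sqrt (2 * π) := by
  have h : (fun x : ℝ => gauss1 x) = fun x => Real.exp (-(1/2 : ℝ) * x ^ 2) := by
    funext x; unfold gauss1; ring_nf
  rw [h, integral_gaussian]
  congr 1
  rw [div_div_eq_mul_div, div_one, mul_comm]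

lemma derivative_iter_Hpoly_self (n : ℕ) :
    derivative^[n] (Hpoly n) = C ((n.factorial : ℝ)) := by
  have hdeg : (derivative^[n] (Hpoly n)).natDegree ≤ 0 := by
    have := natDegree_iterate_derivative (Hpoly n) n
    simpa [Hpoly_natDegree] using this
  rw [Polynomial.eq_C_of_natDegree_le_zero hdeg, coeff_iterate_derivative]
  have hc : (Hpoly n).coeff (0 + n) = 1 := by
    simpa [Hpoly_natDegree] using (Hpoly_monic n).coeff_natDegree
  rw [hc]
  simp [Nat.descFactorial_self]

lemma hermite_orth_aux (m n : ℕ) :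
    ∫ x : ℝ, (Hpoly m).eval x * ((Hpoly n).eval x * gauss1 x)
      = ∫ x : ℝ, (derivative^[n] (Hpoly m)).eval x * gauss1 x := by
  have key : (fun x : ℝ => (Hpoly m).eval x * ((Hpoly n).eval x * gauss1 x))
      = fun x => (-1 : ℝ) ^ n * ((Hpoly m).eval x * deriv^[n] gauss1 x) := by
    funext x
    rw [deriv_iter_gauss1]
    rw [show ((-1:ℝ)^n * ((Hpoly m).eval x * ((-1:ℝ)^n * (Hpoly n).eval x * gauss1 x)))
      = ((-1:ℝ)^n * (-1:ℝ)^n) * ((Hpoly m).eval x * ((Hpoly n).eval x * gauss1 x)) by ring,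
      ← mul_pow, neg_mul_neg, one_mul, one_pow, one_mul]
  rw [key, integral_const_mul, ibp_iter, ← mul_assoc, ← mul_pow, neg_mul_neg, one_mul,
    one_pow, one_mul]

lemma hermite_orth (m n : ℕ) :
    ∫ x : ℝ, (Hpoly m).eval x * ((Hpoly n).eval x * gauss1 x)
      = if m = n then (n.factorial : ℝ) * Real.sqrt (2 * π) else 0 := by
  rcases eq_or_ne m n with rfl | hne
  · rw [if_pos rfl, hermite_orth_aux, derivative_iter_Hpoly_self]
    simp only [eval_C]
    rw [integral_const_mul, gauss1_integral]
  · rw [if_neg hne]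
    rcases hne.lt_or_gt with h | h
    · rw [hermite_orth_aux, iterate_derivative_eq_zero (by rw [Hpoly_natDegree]; exact h)]
      simp
    · have comm : (fun x : ℝ => (Hpoly m).eval x * ((Hpoly n).eval x * gauss1 x))
          = fun x => (Hpoly n).eval x * ((Hpoly m).eval x * gauss1 x) := by
        funext x; ring
      rw [comm, hermite_orth_aux,
        iterate_derivative_eq_zero (by rw [Hpoly_natDegree]; exact h)]
      simp

lemma hermite_orth_scaled (m n : ℕ) :
    ∫ u : ℝ, Real.exp (-u ^ 2) * (aeval (Real.sqrt 2 * u) (hermite m) : ℝ)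
        * aeval (Real.sqrt 2 * u) (hermite n)
      = (if m = n then 1 else 0) * Real.sqrt π * (n.factorial : ℝ) := by
  have hfun : (fun u : ℝ => Real.exp (-u ^ 2) * (aeval (Real.sqrt 2 * u) (hermite m) : ℝ)
        * aeval (Real.sqrt 2 * u) (hermite n))
      = fun u => (Hpoly m).eval (Real.sqrt 2 * u)
          * ((Hpoly n).eval (Real.sqrt 2 * u) * gauss1 (Real.sqrt 2 * u)) := by
    funext u
    have hg : gauss1 (Real.sqrt 2 * u) = Real.exp (-u ^ 2) := by
      unfold gauss1; congr 1
      rw [mul_pow, Real.sq_sqrt (by norm_num : (0:ℝ) ≤ 2)]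
      ring
    rw [hg, aeval_hermite_eq, aeval_hermite_eq]; ring
  rw [hfun, Measure.integral_comp_mul_left
    (fun t => (Hpoly m).eval t * ((Hpoly n).eval t * gauss1 t)) (Real.sqrt 2),
    hermite_orth]
  have h2 : Real.sqrt 2 ≠ 0 := by positivity
  have hsplit : Real.sqrt (2 * π) = Real.sqrt 2 * Real.sqrt π :=
    Real.sqrt_mul (by norm_num) π
  rw [abs_inv, abs_of_nonneg (Real.sqrt_nonneg 2), smul_eq_mul]
  split_ifs
  · rw [hsplit]; field_simp
  · simp

lemma hasDerivAt_absPow {a : ℝ} (x : ℝ) (hx : x ≠ 0) :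
    HasDerivAt (fun y : ℝ => |y| ^ a * y) ((a + 1) * |x| ^ a) x := by
  rcases hx.lt_or_gt with hneg | hpos
  · have hx' : (0:ℝ) < -x := by linarith
    have hr : HasDerivAt (fun y : ℝ => (-y) ^ a) ((a * (-x) ^ (a - 1)) * (-1)) x :=
      (Real.hasDerivAt_rpow_const (x := -x) (p := a) (Or.inl hx'.ne')).comp x (hasDerivAt_neg x)
    have h1 := hr.mul (hasDerivAt_id x)
    have heq : (fun y : ℝ => |y| ^ a * y) =ᶠ[nhds x] fun y => (-y) ^ a * y := by
      filter_upwards [Iio_mem_nhds hneg] with y hy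
      rw [abs_of_neg hy]
    refine HasDerivAt.congr_of_eventuallyEq ?_ heq
    convert h1 using 1
    case e'_4 => rfl
    case e'_8 => rfl
    rw [abs_of_neg hneg]
    have hmul : (-x) ^ (a - 1) * (-x) = (-x) ^ a := by
      rw [← Real.rpow_add_one hx'.ne']
      ring_nf
    simp only [id_eq, mul_one]
    linear_combination -a * hmul
  · have hr : HasDerivAt (fun y : ℝ => y ^ a) (a * x ^ (a - 1)) x :=
      Real.hasDerivAt_rpow_const (Or.inl hpos.ne')
    have h1 := hr.mul (hasDerivAt_id x)
    have heq : (fun y : ℝ => |y| ^ a * y) =ᶠ[nhds x] fun y => y ^ a * y := by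
      filter_upwards [Ioi_mem_nhds hpos] with y hy
      rw [abs_of_pos hy]
    refine HasDerivAt.congr_of_eventuallyEq ?_ heq
    convert h1 using 1
    case e'_4 => rfl
    case e'_8 => rfl
    rw [abs_of_pos hpos]
    have hmul : x ^ (a - 1) * x = x ^ a := by
      rw [← Real.rpow_add_one hpos.ne']
      ring_nf
    simp only [id_eq, mul_one]
    linear_combination -a * hmul

lemma sq_rpow {b : ℝ} (hb : 0 < b) (p : ℝ) : (b ^ p) ^ 2 = b ^ (2 * p) := by
  rw [sq, ← Real.rpow_add hb]
  ring_nf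

/-- orthogonality of the deformed oscillator stationary states:
`∫ (λ₀²x²)^(a/2)·exp(-(λ₀²x²)^(a+1)/(a+1))·He_m(√2ξ(x))·He_n(√2ξ(x)) dx
  = δ_{mn}·√π·n!/(λ₀·√(a+1))`. -/
theorem stmt9 (lam a : ℝ) (hlam : 0 < lam) (ha : -1 < a) (m n : ℕ) :
    ∫ x : ℝ,
        (lam ^ 2 * x ^ 2) ^ (a / 2) * Real.exp (-((lam ^ 2 * x ^ 2) ^ (a + 1)) / (a + 1))
          * Polynomial.aeval (Real.sqrt 2 * xiPCT lam a x) (Polynomial.hermite m)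
          * Polynomial.aeval (Real.sqrt 2 * xiPCT lam a x) (Polynomial.hermite n)
      = (if m = n then 1 else 0) * Real.sqrt Real.pi * (n.factorial : ℝ)
          / (lam * Real.sqrt (a + 1)) := by
  have ha1 : (0:ℝ) < a + 1 := by linarith
  set c : ℝ := lam ^ (a + 1) * (a + 1) ^ (-(1 : ℝ) / 2) with hc_def
  have hc : 0 < c := mul_pos (Real.rpow_pos_of_pos hlam _) (Real.rpow_pos_of_pos ha1 _)
  set f : ℝ → ℝ := xiPCT lam a with hf_def
  have hfx : ∀ x, f x = c * (|x| ^ a * x) := fun x => by rw [hf_def, xiPCT, ← hc_def]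
  set G : ℝ → ℝ := fun u => Real.exp (-u ^ 2) * aeval (Real.sqrt 2 * u) (hermite m)
      * aeval (Real.sqrt 2 * u) (hermite n) with hG_def
  set f' : ℝ → ℝ := fun x => c * ((a + 1) * |x| ^ a) with hf'_def
  -- monotonicity
  have hmono : StrictMono (fun x : ℝ => |x| ^ a * x) := by
    apply strictMono_of_odd_strictMonoOn_nonneg
    · intro x; rw [abs_neg]; ring
    · intro x hx y hy hxy
      have habs : ∀ z : ℝ, 0 ≤ z → |z| ^ a * z = z ^ (a + 1) := by
        intro z hz
        rcases hz.eq_or_lt with rfl | hz'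
        · simp [Real.zero_rpow ha1.ne']
        · rw [abs_of_pos hz', ← Real.rpow_add_one hz'.ne']
      simp only
      rw [habs x hx, habs y (hx.trans hxy.le)]
      exact Real.rpow_lt_rpow hx hxy ha1
  have hmonoF : StrictMono f := by
    intro x y hxy
    rw [hfx x, hfx y]
    exact mul_lt_mul_of_pos_left (hmono hxy) hc
  have hf0 : f 0 = 0 := by rw [hfx]; simp
  -- derivative
  have hder : ∀ x : ℝ, x ≠ 0 → HasDerivAt f (f' x) x := by
    intro x hx
    have := (hasDerivAt_absPow (a := a) x hx).const_mul c
    apply this.congr_of_eventuallyEq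
    filter_upwards with y
    rw [hfx y]
  -- image
  have himg : f '' ({0}ᶜ : Set ℝ) = ({0}ᶜ : Set ℝ) := by
    apply Set.eq_of_subset_of_subset
    · rintro u ⟨x, hx, rfl⟩
      simp only [mem_compl_iff, mem_singleton_iff] at hx ⊢
      intro h
      exact hx (hmonoF.injective (h.trans hf0.symm))
    · intro u hu
      simp only [mem_compl_iff, mem_singleton_iff] at hu
      rcases lt_or_gt_of_ne hu with hneg | hpos
      · set t : ℝ := ((-u) / c) ^ (a + 1)⁻¹ with ht_def
        have ht : 0 < t := Real.rpow_pos_of_pos (div_pos (by linarith) hc) _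
        refine ⟨-t, by simp [mem_compl_iff, ht.ne'], ?_⟩
        rw [hfx]
        rw [abs_neg, abs_of_pos ht]
        have : t ^ a * t = t ^ (a + 1) := (Real.rpow_add_one ht.ne' a).symm
        rw [show t ^ a * -t = -(t ^ a * t) by ring, this, ht_def,
          ← Real.rpow_mul (div_pos (by linarith : (0:ℝ) < -u) hc).le,
          inv_mul_cancel₀ ha1.ne', Real.rpow_one]
        field_simp
      · set t : ℝ := (u / c) ^ (a + 1)⁻¹ with ht_def
        have ht : 0 < t := Real.rpow_pos_of_pos (div_pos hpos hc) _
        refine ⟨t, by simp [mem_compl_iff, ht.ne'], ?_⟩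
        rw [hfx, abs_of_pos ht, ← Real.rpow_add_one ht.ne', ht_def,
          ← Real.rpow_mul (div_pos hpos hc).le,
          inv_mul_cancel₀ ha1.ne', Real.rpow_one]
        field_simp
  -- pointwise identity
  have key : ∀ x : ℝ, x ≠ 0 →
      (lam ^ 2 * x ^ 2) ^ (a / 2) * Real.exp (-((lam ^ 2 * x ^ 2) ^ (a + 1)) / (a + 1))
          * aeval (Real.sqrt 2 * f x) (hermite m) * aeval (Real.sqrt 2 * f x) (hermite n)
        = (lam * Real.sqrt (a + 1))⁻¹ * (|f' x| * G (f x)) := by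
    intro x hx
    have hA : 0 < |x| := abs_pos.mpr hx
    have hLA : 0 < lam * |x| := mul_pos hlam hA
    have hbase : lam ^ 2 * x ^ 2 = (lam * |x|) ^ 2 := by
      rw [← sq_abs x]; ring
    have p1 : (lam ^ 2 * x ^ 2) ^ (a / 2) = lam ^ a * |x| ^ a := by
      rw [hbase, ← Real.rpow_natCast (lam * |x|) 2, ← Real.rpow_mul hLA.le,
        show ((2:ℕ):ℝ) * (a / 2) = a by push_cast; ring,
        Real.mul_rpow hlam.le hA.le]
    have hcsq : c ^ 2 = lam ^ (2 * (a + 1)) * (a + 1)⁻¹ := by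
      rw [hc_def, mul_pow, sq_rpow hlam, sq_rpow ha1,
        show 2 * (-(1:ℝ)/2) = -1 by ring, Real.rpow_neg_one]
    have hAsq : (|x| ^ a) ^ 2 * x ^ 2 = |x| ^ (2 * (a + 1)) := by
      rw [sq_rpow hA, ← sq_abs x, ← Real.rpow_natCast |x| 2, ← Real.rpow_add hA]
      push_cast; ring_nf
    have hfx2 : (f x) ^ 2 = lam ^ (2 * (a + 1)) * (a + 1)⁻¹ * |x| ^ (2 * (a + 1)) := by
      have e1 : (f x) ^ 2 = c ^ 2 * ((|x| ^ a) ^ 2 * x ^ 2) := by rw [hfx]; ring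
      rw [e1, hcsq, hAsq]
    have hexp : (lam ^ 2 * x ^ 2) ^ (a + 1) = (a + 1) * (f x) ^ 2 := by
      rw [hbase, ← Real.rpow_natCast (lam * |x|) 2, ← Real.rpow_mul hLA.le,
        Real.mul_rpow hlam.le hA.le, hfx2,
        show ((2:ℕ):ℝ) * (a + 1) = 2 * (a + 1) by push_cast; ring]
      field_simp
    have hexparg : -((lam ^ 2 * x ^ 2) ^ (a + 1)) / (a + 1) = -(f x) ^ 2 := by
      rw [hexp, mul_comm (a + 1), neg_div, mul_div_assoc, div_self ha1.ne', mul_one]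
    have hfpos : 0 < f' x := by
      rw [hf'_def]
      exact mul_pos hc (mul_pos ha1 (Real.rpow_pos_of_pos hA a))
    have e1 : (a + 1) ^ (-(1:ℝ)/2) * (a + 1) = (a + 1) ^ ((1:ℝ)/2) := by
      nth_rewrite 2 [← Real.rpow_one (a + 1)]
      rw [← Real.rpow_add ha1]
      norm_num
    have p3 : (lam * Real.sqrt (a + 1))⁻¹ * f' x = lam ^ a * |x| ^ a := by
      have hc' : c * ((a + 1) * |x| ^ a)
          = (lam * (a + 1) ^ ((1:ℝ)/2)) * (lam ^ a * |x| ^ a) := by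
        rw [hc_def, Real.rpow_add_one hlam.ne']
        linear_combination (lam ^ a * lam * |x| ^ a) * e1
      rw [hf'_def]
      simp only
      rw [hc', Real.sqrt_eq_rpow,
        inv_mul_cancel_left₀ (by positivity : lam * (a + 1) ^ ((1:ℝ)/2) ≠ 0)]
    rw [p1, hexparg, abs_of_pos hfpos, hG_def]
    simp only
    linear_combination (Real.exp (-(f x) ^ 2) * aeval (Real.sqrt 2 * f x) (hermite m)
      * aeval (Real.sqrt 2 * f x) (hermite n)) * p3.symm
  -- the integral computation
  have hms : MeasurableSet ({0}ᶜ : Set ℝ) := (measurableSet_singleton 0).compl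
  have hrestrict : (volume : Measure ℝ).restrict ({0}ᶜ : Set ℝ) = volume :=
    MeasureTheory.restrict_compl_singleton 0
  calc ∫ x : ℝ, (lam ^ 2 * x ^ 2) ^ (a / 2)
          * Real.exp (-((lam ^ 2 * x ^ 2) ^ (a + 1)) / (a + 1))
          * aeval (Real.sqrt 2 * xiPCT lam a x) (hermite m)
          * aeval (Real.sqrt 2 * xiPCT lam a x) (hermite n)
      = ∫ x in ({0}ᶜ : Set ℝ), (lam ^ 2 * x ^ 2) ^ (a / 2)
          * Real.exp (-((lam ^ 2 * x ^ 2) ^ (a + 1)) / (a + 1))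
          * aeval (Real.sqrt 2 * f x) (hermite m)
          * aeval (Real.sqrt 2 * f x) (hermite n) := by
        rw [hrestrict]
    _ = ∫ x in ({0}ᶜ : Set ℝ), (lam * Real.sqrt (a + 1))⁻¹ * (|f' x| * G (f x)) := by
        refine setIntegral_congr_fun hms fun x hx => ?_
        exact key x (by simpa using hx)
    _ = (lam * Real.sqrt (a + 1))⁻¹ * ∫ x in ({0}ᶜ : Set ℝ), |f' x| • G (f x) := by
        simp_rw [smul_eq_mul]
        exact integral_const_mul _ _
    _ = (lam * Real.sqrt (a + 1))⁻¹ * ∫ u in ({0}ᶜ : Set ℝ), G u := by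
        rw [← integral_image_eq_integral_abs_deriv_smul hms
          (fun x hx => (hder x (by simpa using hx)).hasDerivWithinAt)
          (hmonoF.injective.injOn) G, himg]
    _ = (lam * Real.sqrt (a + 1))⁻¹ * ∫ u : ℝ, G u := by rw [hrestrict]
    _ = (lam * Real.sqrt (a + 1))⁻¹
          * ((if m = n then 1 else 0) * Real.sqrt Real.pi * (n.factorial : ℝ)) := by
        rw [hG_def, hermite_orth_scaled m n]
    _ = (if m = n then 1 else 0) * Real.sqrt Real.pi * (n.factorial : ℝ)
          / (lam * Real.sqrt (a + 1)) := by
        rw [div_eq_inv_mul]
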